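/- (Claim 4, forward direction, stability part) Let G be a roommates instance, U the set of vertices left uncovered by a popular matching P, Z = V ∖ N(U) ∖ U, P_Z ⊆ P a matching covering Z with each edge meeting Z, and V' = Z ∪ P_Z(Z) ∪ U. Then S = P ∖ P_Z is a stable matching in the subgraph induced on V ∖ V' and covers exactly the vertices of V ∖ V'. -/

import Mathlib

/-- A roommates instance: a simple graph together with, for each vertex,
a ranking of vertices (lower rank = more preferred), injective on neighbors. -/
structure Roommates (V : Type*) where
  G : SimpleGraph V
  rank : V → V → ℕ
  rank_inj : ∀ u a b, G.Adj u a → G.Adj u b → rank u a = rank u b → a = b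

variable {V : Type*}

/-- `M` encodes a matching: `M u = some v` means `u` is matched to `v`. -/
def IsMatching (R : Roommates V) (M : V → Option V) : Prop :=
  ∀ u v, M u = some v → R.G.Adj u v ∧ M v = some u

/-- Vertex `v` prefers matching `M` to matching `M'`. -/
def Prefers (R : Roommates V) (M M' : V → Option V) (v : V) : Prop :=
  (∃ w, M v = some w ∧ M' v = none) ∨
  (∃ w w', M v = some w ∧ M' v = some w' ∧ R.rank v w < R.rank v w')

/-- `M` is popular: it never loses a head-to-head election. -/
def Popular [Fintype V] (R : Roommates V) (M : V → Option V) : Prop :=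
  ∀ M', IsMatching R M' →
    {v | Prefers R M' M v}.ncard ≤ {v | Prefers R M M' v}.ncard

/-- Edge `(u,v)` blocks `M`: each endpoint is unmatched or prefers the other
endpoint to its partner. -/
def Blocks (R : Roommates V) (M : V → Option V) (u v : V) : Prop :=
  R.G.Adj u v ∧ M u ≠ some v ∧
  (∀ w, M u = some w → R.rank u v < R.rank u w) ∧
  (∀ w, M v = some w → R.rank v u < R.rank v w)

def IsStable (R : Roommates V) (M : V → Option V) : Prop :=
  ∀ u v, ¬ Blocks R M u v

/-- `u` votes `+` for `v` against its situation in `M`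
(true when `u` is unmatched or prefers `v` to its `M`-partner). -/
def VotePlus (R : Roommates V) (M : V → Option V) (u v : V) : Prop :=
  ∀ w, M u = some w → R.rank u v < R.rank u w

/-- Non-matching edge of `G_M`, i.e. not labeled `(−,−)`. -/
def NonMatchEdge (R : Roommates V) (M : V → Option V) (u v : V) : Prop :=
  R.G.Adj u v ∧ M u ≠ some v ∧ (VotePlus R M u v ∨ VotePlus R M v u)

/-- `AltList A M b l`: the list of vertices `l` forms an alternating sequence,
whose first edge is a matching edge if `b = true` and an allowed (`A`)
non-matching edge if `b = false`. -/
def AltList (A : V → V → Prop) (M : V → Option V) : Bool → List V → Prop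
  | _, [] => True
  | _, [_] => True
  | true, u :: v :: rest => M u = some v ∧ AltList A M false (v :: rest)
  | false, u :: v :: rest => A u v ∧ AltList A M true (v :: rest)

/-- A matching of the subgraph induced on `W`. -/
def IsMatchingOn (R : Roommates V) (W : Set V) (M : V → Option V) : Prop :=
  IsMatching R M ∧ ∀ u v, M u = some v → u ∈ W ∧ v ∈ W

/-- Popularity within the subgraph induced on `W`. -/
def PopularOn (R : Roommates V) (W : Set V) (M : V → Option V) : Prop :=
  ∀ M', IsMatchingOn R W M' →
    {v | v ∈ W ∧ Prefers R M' M v}.ncard ≤ {v | v ∈ W ∧ Prefers R M M' v}.ncard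

/-- Stability within the subgraph induced on `W`. -/
def StableOn (R : Roommates V) (W : Set V) (M : V → Option V) : Prop :=
  ∀ u v, u ∈ W → v ∈ W → ¬ Blocks R M u v

/-- Claim 4, forward direction, stability part: with `P` popular
leaving exactly `U` uncovered, `P_Z ⊆ P` a matching covering `Z` whose edges
all meet `Z`, and `V' = Z ∪ P_Z(Z) ∪ U`, the matching `S = P ∖ P_Z` covers
exactly `V ∖ V'` (every vertex outside `V'` is `P`-matched to a vertex outside
`V'`) and is stable in the subgraph induced on `V ∖ V'`. -/
theorem claim4_forward_stability {V : Type*} [Fintype V] (R : Roommates V)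
    (P : V → Option V) (hP : IsMatching R P) (hpop : Popular R P)
    (U : Set V) (hU : ∀ v, P v = none ↔ v ∈ U)
    (Z : Set V) (hZ : Z = {w | w ∉ U ∧ ∀ x ∈ U, ¬ R.G.Adj w x})
    (PZ : V → Option V) (hPZ : IsMatching R PZ)
    (hsub : ∀ u v, PZ u = some v → P u = some v)
    (hcov : ∀ z ∈ Z, ∃ y, PZ z = some y)
    (hmeet : ∀ u v, PZ u = some v → u ∈ Z ∨ v ∈ Z)
    (V' : Set V) (hV' : V' = Z ∪ {y | ∃ z ∈ Z, PZ z = some y} ∪ U) :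
    (∀ x, x ∉ V' → ∃ y, P x = some y ∧ y ∉ V') ∧
    (∀ p q, p ∉ V' → q ∉ V' → ¬ Blocks R P p q) := by
  classical
  subst hV'
  -- Part 1 as a reusable key lemma
  have key : ∀ x, x ∉ Z ∪ {y | ∃ z ∈ Z, PZ z = some y} ∪ U →
      ∃ y, P x = some y ∧ y ∉ Z ∪ {y | ∃ z ∈ Z, PZ z = some y} ∪ U := by
    intro x hx
    have hxU : x ∉ U := fun h => hx (Or.inr h)
    have hxZ : x ∉ Z := fun h => hx (Or.inl (Or.inl h))
    have hxPZ : x ∉ {y | ∃ z ∈ Z, PZ z = some y} := fun h => hx (Or.inl (Or.inr h))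
    cases hy : P x with
    | none => exact absurd ((hU x).mp hy) hxU
    | some y =>
      refine ⟨y, rfl, ?_⟩
      have hyx : P y = some x := (hP x y hy).2
      intro hmem
      rcases hmem with (hyZ | hyPZ) | hyU
      · -- y ∈ Z : then PZ y = some w with w = x, so x ∈ PZ(Z)
        obtain ⟨w, hw⟩ := hcov y hyZ
        have hPw : P y = some w := hsub y w hw
        have : w = x := by rw [hyx] at hPw; exact (Option.some_injective _ hPw).symm
        subst this
        exact hxPZ ⟨y, hyZ, hw⟩
      · -- y ∈ PZ(Z) : ∃ z ∈ Z, PZ z = some y ⇒ P y = some z ⇒ z = x ⇒ x ∈ Z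
        obtain ⟨z, hzZ, hzy⟩ := hyPZ
        have hPzy : P z = some y := hsub z y hzy
        have hPyz : P y = some z := (hP z y hPzy).2
        have : z = x := by rw [hyx] at hPyz; exact (Option.some_injective _ hPyz).symm
        subst this
        exact hxZ hzZ
      · -- y ∈ U : P y = none, contradiction
        have := (hU y).mpr hyU
        rw [hyx] at this; exact nomatch this
  refine ⟨key, ?_⟩
  intro p q hp hq hblock
  obtain ⟨hadj, hne, hprefp, hprefq⟩ := hblock
  obtain ⟨p', hPp, hp'⟩ := key p hp
  obtain ⟨q', hPq, hq'⟩ := key q hq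
  have hPp' : P p' = some p := (hP p p' hPp).2
  have hPq' : P q' = some q := (hP q q' hPq).2
  -- p' ∉ Z and p' ∉ U, so p' has a neighbor u ∈ U
  have hp'U : p' ∉ U := fun h => hp' (Or.inr h)
  have hp'Z : p' ∉ Z := fun h => hp' (Or.inl (Or.inl h))
  rw [hZ] at hp'Z
  have hp'N : ∃ u ∈ U, R.G.Adj p' u := by
    by_contra h
    push_neg at h
    exact hp'Z ⟨hp'U, h⟩
  obtain ⟨u, huU, hadjpu⟩ := hp'N
  have hPu : P u = none := (hU u).mpr huU
  -- distinctness facts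
  have hup : u ≠ p := by rintro rfl; rw [hPu] at hPp; exact nomatch hPp
  have hup' : u ≠ p' := by rintro rfl; rw [hPu] at hPp'; exact nomatch hPp'
  have huq : u ≠ q := by rintro rfl; rw [hPu] at hPq; exact nomatch hPq
  have huq' : u ≠ q' := by rintro rfl; rw [hPu] at hPq'; exact nomatch hPq'
  have hpq : p ≠ q := hadj.ne
  have hpp' : p ≠ p' := (hP p p' hPp).1.ne
  have hqq' : q ≠ q' := (hP q q' hPq).1.ne
  have hp'q : p' ≠ q := by rintro rfl; exact hne hPp
  have hpq' : p ≠ q' := by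
    rintro rfl
    exact hne hPq'
  have hp'q' : p' ≠ q' := by
    rintro rfl
    have h := hPp'.symm.trans hPq'
    exact hpq (Option.some_injective _ h)
  -- the rival matching
  set M' : V → Option V := fun x =>
    if x = u then some p' else if x = p' then some u else
    if x = p then some q else if x = q then some p else
    if x = q' then none else P x with hM'def
  have hMu : M' u = some p' := by simp [hM'def]
  have hMp' : M' p' = some u := by simp [hM'def, hup'.symm]
  have hMp : M' p = some q := by simp [hM'def, hup.symm, hpp']
  have hMq : M' q = some p := by simp [hM'def, huq.symm, hp'q.symm, hpq.symm]
  have hMq' : M' q' = none := by simp [hM'def, huq'.symm, hp'q'.symm, hpq'.symm, hqq'.symm]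
  have hMother : ∀ x, x ≠ u → x ≠ p' → x ≠ p → x ≠ q → x ≠ q' → M' x = P x := by
    intro x h1 h2 h3 h4 h5; simp [hM'def, h1, h2, h3, h4, h5]
  have hM' : IsMatching R M' := by
    intro a b hab
    by_cases h1 : a = u
    · subst h1; rw [hMu] at hab
      cases hab; exact ⟨hadjpu.symm, hMp'⟩
    by_cases h2 : a = p'
    · subst h2; rw [hMp'] at hab
      cases hab; exact ⟨hadjpu, hMu⟩
    by_cases h3 : a = p
    · subst h3; rw [hMp] at hab
      cases hab; exact ⟨hadj, hMq⟩
    by_cases h4 : a = q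
    · subst h4; rw [hMq] at hab
      cases hab; exact ⟨hadj.symm, hMp⟩
    by_cases h5 : a = q'
    · subst h5; rw [hMq'] at hab; exact nomatch hab
    · rw [hMother a h1 h2 h3 h4 h5] at hab
      have hba : P b = some a := (hP a b hab).2
      have hb1 : b ≠ u := by rintro rfl; rw [hPu] at hba; exact nomatch hba
      have hb2 : b ≠ p' := by
        rintro rfl; rw [hPp'] at hba; exact h3 (Option.some_injective _ hba).symm
      have hb3 : b ≠ p := by
        rintro rfl; rw [hPp] at hba; exact h2 (Option.some_injective _ hba).symm
      have hb4 : b ≠ q := by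
        rintro rfl; rw [hPq] at hba; exact h5 (Option.some_injective _ hba).symm
      have hb5 : b ≠ q' := by
        rintro rfl; rw [hPq'] at hba; exact h4 (Option.some_injective _ hba).symm
      exact ⟨(hP a b hab).1, by rw [hMother b hb1 hb2 hb3 hb4 hb5]; exact hba⟩
  have hcount := hpop M' hM'
  -- the set of vertices preferring P is contained in {p', q'}
  have hsub2 : {v | Prefers R P M' v} ⊆ {p', q'} := by
    intro v hv
    by_contra hvmem
    simp only [Set.mem_insert_iff, Set.mem_singleton_iff] at hvmem
    push_neg at hvmem
    obtain ⟨hv2, hv5⟩ := hvmem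
    by_cases h1 : v = u
    · subst h1
      rcases hv with ⟨w, hw, _⟩ | ⟨w, w', hw, _, _⟩ <;>
        (rw [hPu] at hw; exact nomatch hw)
    by_cases h3 : v = p
    · subst h3
      rcases hv with ⟨w, _, hw2⟩ | ⟨w, w', hw, hw', hlt⟩
      · rw [hMp] at hw2; exact nomatch hw2
      · rw [hPp] at hw; rw [hMp] at hw'
        cases hw; cases hw'
        exact absurd (hprefp p' hPp) (not_lt.mpr hlt.le)
    by_cases h4 : v = q
    · subst h4
      rcases hv with ⟨w, _, hw2⟩ | ⟨w, w', hw, hw', hlt⟩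
      · rw [hMq] at hw2; exact nomatch hw2
      · rw [hPq] at hw; rw [hMq] at hw'
        cases hw; cases hw'
        exact absurd (hprefq q' hPq) (not_lt.mpr hlt.le)
    · have heq : M' v = P v := hMother v h1 hv2 h3 h4 hv5
      rcases hv with ⟨w, hw, hw2⟩ | ⟨w, w', hw, hw', hlt⟩
      · rw [heq, hw] at hw2; exact nomatch hw2
      · rw [heq, hw] at hw'
        cases hw'
        exact lt_irrefl _ hlt
  have hsub3 : ({u, p, q} : Set V) ⊆ {v | Prefers R M' P v} := by
    intro v hv
    rcases hv with rfl | rfl | rfl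
    · exact Or.inl ⟨p', hMu, hPu⟩
    · exact Or.inr ⟨q, p', hMp, hPp, hprefp p' hPp⟩
    · exact Or.inr ⟨p, q', hMq, hPq, hprefq q' hPq⟩
  have h2le : {v | Prefers R P M' v}.ncard ≤ 2 := by
    calc {v | Prefers R P M' v}.ncard ≤ ({p', q'} : Set V).ncard :=
          Set.ncard_le_ncard hsub2 (Set.toFinite _)
      _ = 2 := Set.ncard_pair hp'q'
  have h3le : 3 ≤ {v | Prefers R M' P v}.ncard := by
    have : ({u, p, q} : Set V).ncard = 3 := by
      rw [Set.ncard_insert_of_notMem (by simp [hup, huq]) (Set.toFinite _),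
        Set.ncard_pair hpq]
    calc (3 : ℕ) = ({u, p, q} : Set V).ncard := this.symm
      _ ≤ {v | Prefers R M' P v}.ncard := Set.ncard_le_ncard hsub3 (Set.toFinite _)
  omega
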